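/- arXiv:1412.2150 — 2 statements merged into one kernel-verified Lean document; each statement's English description precedes it below -/
import Mathlib

section
/- Let Z be a square-integrable real random variable, L ∈ ℝ with 0 < P(Z < L) < 1, m = E[Z·1{Z < L}] / P(Z < L), and Z* = Z·1{Z ≥ L} + m·1{Z < L}. Suppose Y = β₀ + γZ + ε where ε is square-integrable with E[ε] = 0, E[ε·1{Z < L}] = 0, and E[ε·Z·1{Z ≥ L}] = 0 (so that ε is uncorrelated with Z*; this holds in particular when E(ε | Z) = 0). If Var(Z*) > 0, then the population simple-linear-regression slope of Y on Z* equals γ and the intercept equals β₀; that is, Cov(Y, Z*)/Var(Z*) = γ and E[Y] − γ·E[Z*] = β₀. -/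
open MeasureTheory

lemma aux_int_mul {Ω : Type*} [MeasurableSpace Ω] {P : Measure Ω} {f g : Ω → ℝ}
    (hf : MemLp f 2 P) (hg : MemLp g 2 P) :
    Integrable (fun ω => f ω * g ω) P := by
  have h : MemLp (f • g) 1 P :=
    MemLp.smul (r := 1) hg hf (hpqr := ⟨by
      rw [inv_one, ENNReal.inv_two_add_inv_two]⟩)
  exact memLp_one_iff_integrable.mp h

/-- In the simple linear regression `Y = β₀ + γZ + ε` with `ε` uncorrelated with the
substituted covariate `Z* = Z·1{Z ≥ L} + E[Z | Z < L]·1{Z < L}`, the population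
regression of `Y` on `Z*` recovers slope `γ` and intercept `β₀`. -/
theorem stmt_9
    (Ω : Type*) [MeasurableSpace Ω] (P : Measure Ω) [IsProbabilityMeasure P]
    (Z : Ω → ℝ) (hZmeas : Measurable Z) (hZ2 : MemLp Z 2 P)
    (L : ℝ)
    (h0 : 0 < P {ω | Z ω < L}) (h1 : P {ω | Z ω < L} < 1)
    (m : ℝ) (hm : m = (∫ ω in {ω | Z ω < L}, Z ω ∂P) / (P {ω | Z ω < L}).toReal)
    (Zstar : Ω → ℝ) (hZstar : ∀ ω, Zstar ω = if Z ω < L then m else Z ω)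
    (β₀ γ : ℝ) (ε : Ω → ℝ) (hεmeas : Measurable ε) (hε2 : MemLp ε 2 P)
    (Y : Ω → ℝ) (hY : ∀ ω, Y ω = β₀ + γ * Z ω + ε ω)
    (hε0 : ∫ ω, ε ω ∂P = 0)
    (hε1 : ∫ ω in {ω | Z ω < L}, ε ω ∂P = 0)
    (hε2' : ∫ ω in {ω | L ≤ Z ω}, ε ω * Z ω ∂P = 0)
    (hVarpos :
      0 < (∫ ω, Zstar ω * Zstar ω ∂P) - (∫ ω, Zstar ω ∂P) * (∫ ω, Zstar ω ∂P)) :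
    ((∫ ω, Y ω * Zstar ω ∂P) - (∫ ω, Y ω ∂P) * (∫ ω, Zstar ω ∂P)) /
        ((∫ ω, Zstar ω * Zstar ω ∂P) - (∫ ω, Zstar ω ∂P) * (∫ ω, Zstar ω ∂P)) = γ ∧
    (∫ ω, Y ω ∂P) - γ * (∫ ω, Zstar ω ∂P) = β₀ := by
  set s := {ω | Z ω < L} with hsdef
  have hs : MeasurableSet s := measurableSet_lt hZmeas measurable_const
  have hsc : sᶜ = {ω | L ≤ Z ω} := by ext ω; simp [hsdef, not_lt]
  have hp_pos : 0 < (P s).toReal :=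
    ENNReal.toReal_pos h0.ne' (measure_ne_top P s)
  set p := (P s).toReal with hpdef
  -- Zstar is in L²
  have hZstar_eq : Zstar = s.indicator (fun _ => m) + sᶜ.indicator Z := by
    funext ω
    rw [hZstar ω]
    by_cases h : Z ω < L
    · simp [Set.indicator_of_mem, Set.indicator_of_notMem, h, hsdef,
        Set.mem_setOf_eq, Pi.add_apply]
    · simp [Set.indicator_of_mem, Set.indicator_of_notMem, h, hsdef,
        Set.mem_setOf_eq, Pi.add_apply]
  have hZstar2 : MemLp Zstar 2 P := by
    rw [hZstar_eq]
    exact ((memLp_const m).indicator hs).add (hZ2.indicator hs.compl)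
  -- integrability facts
  have intZ : Integrable Z P := hZ2.integrable one_le_two
  have intε : Integrable ε P := hε2.integrable one_le_two
  have intZs : Integrable Zstar P := hZstar2.integrable one_le_two
  have intZsZs : Integrable (fun ω => Zstar ω * Zstar ω) P := aux_int_mul hZstar2 hZstar2
  have intZZs : Integrable (fun ω => Z ω * Zstar ω) P := aux_int_mul hZ2 hZstar2
  have intεZs : Integrable (fun ω => ε ω * Zstar ω) P := aux_int_mul hε2 hZstar2
  have intεZ : Integrable (fun ω => ε ω * Z ω) P := aux_int_mul hε2 hZ2
  -- on s, Zstar = m; on sᶜ, Zstar = Z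
  have hZs_on_s : ∀ ω ∈ s, Zstar ω = m := fun ω hω => by
    simp only [hsdef, Set.mem_setOf_eq] at hω
    rw [hZstar ω, if_pos hω]
  have hZs_on_sc : ∀ ω ∈ sᶜ, Zstar ω = Z ω := fun ω hω => by
    simp only [hsdef, Set.mem_compl_iff, Set.mem_setOf_eq] at hω
    rw [hZstar ω, if_neg hω]
  have hmp : m * p = ∫ ω in s, Z ω ∂P := by
    rw [hm]; field_simp
  -- E[Zstar] = E[Z]
  have hEZs : ∫ ω, Zstar ω ∂P = ∫ ω, Z ω ∂P := by
    rw [← integral_add_compl hs intZs, ← integral_add_compl hs intZ]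
    congr 1
    · rw [setIntegral_congr_fun hs hZs_on_s, setIntegral_const, measureReal_def, ← hpdef, smul_eq_mul,
        mul_comm, hmp]
    · exact setIntegral_congr_fun hs.compl hZs_on_sc
  -- E[Z·Zstar] = E[Zstar·Zstar]
  have hEZZs : ∫ ω, Z ω * Zstar ω ∂P = ∫ ω, Zstar ω * Zstar ω ∂P := by
    rw [← integral_add_compl hs intZZs, ← integral_add_compl hs intZsZs]
    congr 1
    · have h₁ : ∀ ω ∈ s, Z ω * Zstar ω = Z ω * m := fun ω hω => by
        rw [hZs_on_s ω hω]
      have h₂ : ∀ ω ∈ s, Zstar ω * Zstar ω = (m : ℝ) * m := fun ω hω => by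
        rw [hZs_on_s ω hω]
      rw [setIntegral_congr_fun hs h₁, setIntegral_congr_fun hs h₂,
        setIntegral_const, measureReal_def, ← hpdef, smul_eq_mul]
      rw [integral_mul_const, ← hmp]
      ring
    · refine setIntegral_congr_fun hs.compl fun ω hω => ?_
      rw [hZs_on_sc ω hω]
  -- E[ε·Zstar] = 0
  have hEεZs : ∫ ω, ε ω * Zstar ω ∂P = 0 := by
    rw [← integral_add_compl hs intεZs]
    have h₁ : ∀ ω ∈ s, ε ω * Zstar ω = ε ω * m := fun ω hω => by
      rw [hZs_on_s ω hω]
    have h₂ : ∀ ω ∈ sᶜ, ε ω * Zstar ω = ε ω * Z ω := fun ω hω => by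
      rw [hZs_on_sc ω hω]
    rw [setIntegral_congr_fun hs h₁, setIntegral_congr_fun hs.compl h₂,
      integral_mul_const, hε1, hsc, hε2']
    simp
  -- E[Y] and E[Y·Zstar]
  have intconst : Integrable (fun _ : Ω => β₀) P := integrable_const _
  have hEY : ∫ ω, Y ω ∂P = β₀ + γ * ∫ ω, Z ω ∂P := by
    have : (fun ω => Y ω) = fun ω => (β₀ + γ * Z ω) + ε ω := by
      funext ω; rw [hY ω]
    have intf : Integrable (fun ω => β₀ + γ * Z ω) P := by
      exact intconst.add (intZ.const_mul γ)
    rw [this, integral_add intf intε, integral_add intconst (intZ.const_mul γ),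
      integral_const, integral_const_mul, hε0]
    simp
  have hEYZs : ∫ ω, Y ω * Zstar ω ∂P =
      β₀ * (∫ ω, Zstar ω ∂P) + γ * (∫ ω, Zstar ω * Zstar ω ∂P) := by
    have hfun : (fun ω => Y ω * Zstar ω)
        = fun ω => (β₀ * Zstar ω + γ * (Z ω * Zstar ω)) + ε ω * Zstar ω := by
      funext ω; rw [hY ω]; ring
    have intf : Integrable (fun ω => β₀ * Zstar ω + γ * (Z ω * Zstar ω)) P := by
      exact (intZs.const_mul β₀).add (intZZs.const_mul γ)
    rw [hfun, integral_add intf intεZs,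
      integral_add (intZs.const_mul β₀) (intZZs.const_mul γ),
      integral_const_mul, integral_const_mul, hEεZs, hEZZs]
    ring
  -- conclude
  set B := ∫ ω, Zstar ω ∂P
  set A := ∫ ω, Zstar ω * Zstar ω ∂P
  have hEY' : ∫ ω, Y ω ∂P = β₀ + γ * B := by rw [hEY, ← hEZs]
  constructor
  · rw [hEYZs, hEY']
    have hne : A - B * B ≠ 0 := ne_of_gt hVarpos
    rw [div_eq_iff hne]
    ring
  · rw [hEY']; ring
end

section
/- Let μ be a σ-finite measure on ℝ, ν a probability measure on a measurable space 𝒳 ⊆ ℝ^p, and for each x ∈ 𝒳 let F₁(·|x) be a probability measure on ℝ (a measurable kernel). Let d : ℝ × 𝒳 → ℝ^k be bounded measurable, θ₀ ∈ ℝ^k, a > 0, c : ℝ → ℝ measurable, and b : ℝ → ℝ differentiable with derivative ḃ, and define f(y|t,x) = exp{(y·⟨d(t,x), θ₀⟩ − b(⟨d(t,x), θ₀⟩))/a + c(y)}. Assume: (i) for every (t,x), y ↦ f(y|t,x) is a probability density with respect to μ satisfying ∫ y f(y|t,x) dμ(y) = ḃ(⟨d(t,x), θ₀⟩); (ii) for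 ν-almost every x and μ-almost every y, Den(y,x) := ∫_{(C,∞)} f(y|s,x) dF₁(s|x) > 0; (iii) all integrals below converge absolutely. Let C ∈ ℝ and define R(y,x) = Den(y,x)^{-1} · ∫_{(C,∞)} f(y|s,x) · (y − ḃ(⟨d(s,x), θ₀⟩)) · d(s,x) dF₁(s|x). Then the full estimating function is unbiased at θ₀: ∫_𝒳 ∫_ℝ ∫_ℝ [ 1{t ≤ C}·(y − ḃ(⟨d(t,x), θ₀⟩))·d(t,x) + 1{t > C}·R(y,x) ] · f(y|t,x) dμ(y) dF₁(t|x) dν(x) = 0 (a vector identity in ℝ^k). -/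
open MeasureTheory

/-- Unbiasedness of the full (complete-case plus censored-case) estimating function at the
true parameter `θ₀`: the population score
`E[ 1{T ≤ C}(Y − ḃ(⟨d(T,X),θ₀⟩))d(T,X) + 1{T > C} R(Y,X) ]` vanishes, where
`R(y,x) = Den(y,x)⁻¹ ∫_{(C,∞)} f(y|s,x)(y − ḃ(⟨d(s,x),θ₀⟩)) d(s,x) dF₁(s|x)` and
`Den(y,x) = ∫_{(C,∞)} f(y|s,x) dF₁(s|x)`. -/
theorem stmt_11 {p k : ℕ}
    (μ : Measure ℝ) [SigmaFinite μ]
    (ν : Measure (Fin p → ℝ)) [IsProbabilityMeasure ν]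
    (F₁ : (Fin p → ℝ) → Measure ℝ) (hF₁prob : ∀ x, IsProbabilityMeasure (F₁ x))
    (hF₁meas : ∀ s : Set ℝ, MeasurableSet s → Measurable fun x => F₁ x s)
    (d : ℝ × (Fin p → ℝ) → EuclideanSpace ℝ (Fin k)) (hdmeas : Measurable d)
    (Md : ℝ) (hdbd : ∀ q, ‖d q‖ ≤ Md)
    (θ₀ : EuclideanSpace ℝ (Fin k))
    (a : ℝ) (ha : 0 < a)
    (c : ℝ → ℝ) (hcmeas : Measurable c)
    (b b' : ℝ → ℝ) (hb : ∀ s, HasDerivAt b (b' s) s)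
    (f : ℝ → ℝ → (Fin p → ℝ) → ℝ)
    (hf : ∀ y t x, f y t x =
      Real.exp ((y * (inner ℝ (d (t, x)) θ₀ : ℝ) - b (inner ℝ (d (t, x)) θ₀ : ℝ)) / a + c y))
    (hdens : ∀ t x, Integrable (fun y => f y t x) μ ∧ ∫ y, f y t x ∂μ = 1)
    (hmean : ∀ t x, Integrable (fun y => y * f y t x) μ ∧
      ∫ y, y * f y t x ∂μ = b' (inner ℝ (d (t, x)) θ₀ : ℝ))
    (C : ℝ)
    (Den : ℝ → (Fin p → ℝ) → ℝ)
    (hDenInt : ∀ y x, Integrable (fun s => f y s x) ((F₁ x).restrict (Set.Ioi C)))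
    (hDen : ∀ y x, Den y x = ∫ s in Set.Ioi C, f y s x ∂(F₁ x))
    (hDenpos : ∀ᵐ x ∂ν, ∀ᵐ y ∂μ, 0 < Den y x)
    (R : ℝ → (Fin p → ℝ) → EuclideanSpace ℝ (Fin k))
    (hRInt : ∀ y x, Integrable (fun s =>
      ((y - b' (inner ℝ (d (s, x)) θ₀ : ℝ)) * f y s x) • d (s, x))
      ((F₁ x).restrict (Set.Ioi C)))
    (hR : ∀ y x, R y x = (Den y x)⁻¹ •
      ∫ s in Set.Ioi C, ((y - b' (inner ℝ (d (s, x)) θ₀ : ℝ)) * f y s x) • d (s, x) ∂(F₁ x))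
    (hFub : ∀ x, Integrable (fun q : ℝ × ℝ =>
      ((q.2 - b' (inner ℝ (d (q.1, x)) θ₀ : ℝ)) * f q.2 q.1 x) • d (q.1, x))
      (((F₁ x).restrict (Set.Ioi C)).prod μ))
    (hint1 : ∀ t x, Integrable (fun y =>
      ((if t ≤ C then (1 : ℝ) else 0) * (y - b' (inner ℝ (d (t, x)) θ₀ : ℝ)) * f y t x) •
          d (t, x) +
        ((if C < t then (1 : ℝ) else 0) * f y t x) • R y x) μ)
    (hint2 : ∀ x, Integrable (fun t => ∫ y,
      (((if t ≤ C then (1 : ℝ) else 0) * (y - b' (inner ℝ (d (t, x)) θ₀ : ℝ)) * f y t x) •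
          d (t, x) +
        ((if C < t then (1 : ℝ) else 0) * f y t x) • R y x) ∂μ) (F₁ x))
    (hint3 : Integrable (fun x => ∫ t, ∫ y,
      (((if t ≤ C then (1 : ℝ) else 0) * (y - b' (inner ℝ (d (t, x)) θ₀ : ℝ)) * f y t x) •
          d (t, x) +
        ((if C < t then (1 : ℝ) else 0) * f y t x) • R y x) ∂μ ∂(F₁ x)) ν) :
    ∫ x, ∫ t, ∫ y,
      (((if t ≤ C then (1 : ℝ) else 0) * (y - b' (inner ℝ (d (t, x)) θ₀ : ℝ)) * f y t x) •
          d (t, x) +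
        ((if C < t then (1 : ℝ) else 0) * f y t x) • R y x) ∂μ ∂(F₁ x) ∂ν = 0 := by
  classical
  have hexp : ∀ y t x, 0 < f y t x := by
    intro y t x; rw [hf]; exact Real.exp_pos _
  have hb'eq : b' = deriv b := funext fun s => ((hb s).deriv).symm
  have hb'meas : Measurable b' := hb'eq ▸ measurable_deriv b
  have hbdiff : Differentiable ℝ b := fun s => (hb s).differentiableAt
  have hbcont : Continuous b := hbdiff.continuous
  -- key: per (t,x), the score integrates to zero in y
  have hgint : ∀ t x, Integrable
      (fun y => (y - b' (inner ℝ (d (t, x)) θ₀ : ℝ)) * f y t x) μ := by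
    intro t x
    have h1 : (fun y => (y - b' (inner ℝ (d (t, x)) θ₀ : ℝ)) * f y t x)
        = fun y => y * f y t x - b' (inner ℝ (d (t, x)) θ₀ : ℝ) * f y t x := by
      funext y; ring
    rw [h1]
    exact (hmean t x).1.sub ((hdens t x).1.const_mul _)
  have hzero : ∀ t x,
      ∫ y, ((y - b' (inner ℝ (d (t, x)) θ₀ : ℝ)) * f y t x) • d (t, x) ∂μ = 0 := by
    intro t x
    rw [integral_smul_const]
    have h0 : ∫ y, (y - b' (inner ℝ (d (t, x)) θ₀ : ℝ)) * f y t x ∂μ = 0 := by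
      have h1 : (fun y => (y - b' (inner ℝ (d (t, x)) θ₀ : ℝ)) * f y t x)
          = fun y => y * f y t x - b' (inner ℝ (d (t, x)) θ₀ : ℝ) * f y t x := by
        funext y; ring
      rw [h1, integral_sub (hmean t x).1 ((hdens t x).1.const_mul _),
        integral_const_mul, (hmean t x).2, (hdens t x).2, mul_one, sub_self]
    rw [h0, zero_smul]
  -- per-x inner double integral is zero, whenever Den > 0 a.e.
  have hmain : ∀ x, (∀ᵐ y ∂μ, 0 < Den y x) →
      (∫ t, ∫ y,
        (((if t ≤ C then (1 : ℝ) else 0) * (y - b' (inner ℝ (d (t, x)) θ₀ : ℝ)) * f y t x) •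
            d (t, x) +
          ((if C < t then (1 : ℝ) else 0) * f y t x) • R y x) ∂μ ∂(F₁ x)) = 0 := by
    intro x hx
    haveI := hF₁prob x
    set G : ℝ → EuclideanSpace ℝ (Fin k) := fun y =>
      ∫ s in Set.Ioi C, ((y - b' (inner ℝ (d (s, x)) θ₀ : ℝ)) * f y s x) • d (s, x) ∂(F₁ x)
      with hG
    -- A-part integrability and vanishing
    have hArw : ∀ t : ℝ, (fun y =>
        ((if t ≤ C then (1 : ℝ) else 0) * (y - b' (inner ℝ (d (t, x)) θ₀ : ℝ)) * f y t x) •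
          d (t, x))
        = fun y => (if t ≤ C then (1 : ℝ) else 0) •
          (((y - b' (inner ℝ (d (t, x)) θ₀ : ℝ)) * f y t x) • d (t, x)) := by
      intro t; funext y; rw [smul_smul, mul_assoc]
    have hAint : ∀ t, Integrable (fun y =>
        ((if t ≤ C then (1 : ℝ) else 0) * (y - b' (inner ℝ (d (t, x)) θ₀ : ℝ)) * f y t x) •
          d (t, x)) μ := by
      intro t
      rw [hArw t]
      exact (((hgint t x).smul_const (d (t, x)))).smul (if t ≤ C then (1 : ℝ) else 0)
    have hAzero : ∀ t, ∫ y,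
        ((if t ≤ C then (1 : ℝ) else 0) * (y - b' (inner ℝ (d (t, x)) θ₀ : ℝ)) * f y t x) •
          d (t, x) ∂μ = 0 := by
      intro t
      rw [hArw t, integral_smul, hzero t x, smul_zero]
    -- inner y-integral equals indicator of Ioi C of J
    set J : ℝ → EuclideanSpace ℝ (Fin k) := fun t => ∫ y, f y t x • R y x ∂μ with hJ
    have hI : ∀ t, (∫ y,
        (((if t ≤ C then (1 : ℝ) else 0) * (y - b' (inner ℝ (d (t, x)) θ₀ : ℝ)) * f y t x) •
            d (t, x) +
          ((if C < t then (1 : ℝ) else 0) * f y t x) • R y x) ∂μ)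
        = (Set.Ioi C).indicator J t := by
      intro t
      have hBint : Integrable
          (fun y => ((if C < t then (1 : ℝ) else 0) * f y t x) • R y x) μ := by
        have h2 := (hint1 t x).sub (hAint t)
        refine h2.congr (Filter.Eventually.of_forall fun y => ?_)
        simp only [Pi.sub_apply, add_sub_cancel_left]
      rw [integral_add (hAint t) hBint, hAzero t, zero_add]
      by_cases ht : C < t
      · rw [Set.indicator_of_mem (Set.mem_Ioi.mpr ht), hJ]
        simp only [if_pos ht, one_mul]
      · have hnm : t ∉ Set.Ioi C := ht
        simp only [Set.indicator_of_notMem hnm, if_neg ht, zero_mul, zero_smul,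
          integral_zero]
    -- joint measurability of (t,y) ↦ f y t x
    have hinner : Measurable (fun t : ℝ => (inner ℝ (d (t, x)) θ₀ : ℝ)) := by
      have hc : Continuous (fun v : EuclideanSpace ℝ (Fin k) => (inner ℝ v θ₀ : ℝ)) :=
        continuous_inner.comp (continuous_id.prodMk continuous_const)
      exact hc.measurable.comp (hdmeas.comp (measurable_id.prodMk measurable_const))
    have hfmeas : Measurable (fun q : ℝ × ℝ => f q.2 q.1 x) := by
      have h1 : (fun q : ℝ × ℝ => f q.2 q.1 x) = fun q : ℝ × ℝ =>
          Real.exp ((q.2 * (inner ℝ (d (q.1, x)) θ₀ : ℝ) - b (inner ℝ (d (q.1, x)) θ₀ : ℝ)) / a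
            + c q.2) := by
        funext q; rw [hf]
      rw [h1]
      exact Real.measurable_exp.comp
        ((((measurable_snd.mul (hinner.comp measurable_fst)).sub
          ((hbcont.measurable.comp hinner).comp measurable_fst)).div_const a).add
          (hcmeas.comp measurable_snd))
    -- measurability of G, Den, R in y
    have hFmeas : StronglyMeasurable (fun q : ℝ × ℝ =>
        ((q.2 - b' (inner ℝ (d (q.1, x)) θ₀ : ℝ)) * f q.2 q.1 x) • d (q.1, x)) := by
      refine Measurable.stronglyMeasurable ?_
      exact ((measurable_snd.sub
          ((hb'meas.comp hinner).comp measurable_fst)).mul hfmeas).smul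
        (hdmeas.comp (measurable_fst.prodMk measurable_const))
    have hGsm : StronglyMeasurable G := hFmeas.integral_prod_left'
    have hDensm : StronglyMeasurable (fun y => Den y x) := by
      have h1 : (fun y => Den y x) = fun y => ∫ s, f y s x ∂((F₁ x).restrict (Set.Ioi C)) := by
        funext y; rw [hDen y x]
      rw [h1]
      exact (hfmeas.stronglyMeasurable).integral_prod_left'
    have hRsm : StronglyMeasurable (fun y => R y x) := by
      have h1 : (fun y => R y x) = fun y => (Den y x)⁻¹ • G y := by
        funext y; rw [hR y x]
      rw [h1]
      exact (hDensm.measurable.inv).stronglyMeasurable.smul hGsm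
    -- integrability of (t,y) ↦ f y t x • R y x on κ.prod μ
    have hGint : Integrable G μ := (hFub x).integral_prod_right
    have hH : Integrable (fun q : ℝ × ℝ => f q.2 q.1 x • R q.2 x) (((F₁ x).restrict (Set.Ioi C)).prod μ) := by
      have hsm : AEStronglyMeasurable (fun q : ℝ × ℝ => f q.2 q.1 x • R q.2 x)
          (((F₁ x).restrict (Set.Ioi C)).prod μ) :=
        (hfmeas.stronglyMeasurable.smul
          (hRsm.comp_measurable measurable_snd)).aestronglyMeasurable
      rw [integrable_prod_iff' hsm]
      constructor
      · exact Filter.Eventually.of_forall fun y => (hDenInt y x).smul_const (R y x)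
      · have heq : ∀ᵐ y ∂μ, (∫ t, ‖f y t x • R y x‖ ∂((F₁ x).restrict (Set.Ioi C))) = ‖G y‖ := by
          filter_upwards [hx] with y hy
          have h1 : (fun t => ‖f y t x • R y x‖) = fun t => f y t x * ‖R y x‖ := by
            funext t
            rw [norm_smul, Real.norm_eq_abs, abs_of_pos (hexp y t x)]
          have h2 : Den y x • R y x = G y := by
            simp only [hG]
            rw [hR y x, smul_smul, mul_inv_cancel₀ (ne_of_gt hy), one_smul]
          rw [h1, integral_mul_const, ← hDen y x, ← h2, norm_smul,
            Real.norm_eq_abs, abs_of_pos hy]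
        exact hGint.norm.congr (Filter.Eventually.mono heq fun y h => h.symm)
    -- compute the double integral
    calc ∫ t, ∫ y,
        (((if t ≤ C then (1 : ℝ) else 0) * (y - b' (inner ℝ (d (t, x)) θ₀ : ℝ)) * f y t x) •
            d (t, x) +
          ((if C < t then (1 : ℝ) else 0) * f y t x) • R y x) ∂μ ∂(F₁ x)
        = ∫ t, (Set.Ioi C).indicator J t ∂(F₁ x) := by
          exact integral_congr_ae (Filter.Eventually.of_forall fun t => hI t)
      _ = ∫ t, J t ∂((F₁ x).restrict (Set.Ioi C)) := by rw [integral_indicator measurableSet_Ioi]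
      _ = ∫ y, ∫ t, f y t x • R y x ∂((F₁ x).restrict (Set.Ioi C)) ∂μ := integral_integral_swap hH
      _ = ∫ y, Den y x • R y x ∂μ := by
          refine integral_congr_ae (Filter.Eventually.of_forall fun y => ?_)
          show (∫ t in Set.Ioi C, f y t x • R y x ∂(F₁ x)) = Den y x • R y x
          rw [integral_smul_const, ← hDen y x]
      _ = ∫ y, G y ∂μ := by
          refine integral_congr_ae ?_
          filter_upwards [hx] with y hy
          show Den y x • R y x = G y
          simp only [hG]
          rw [hR y x, smul_smul, mul_inv_cancel₀ (ne_of_gt hy), one_smul]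
      _ = ∫ s, ∫ y, ((y - b' (inner ℝ (d (s, x)) θ₀ : ℝ)) * f y s x) • d (s, x) ∂μ
            ∂((F₁ x).restrict (Set.Ioi C)) := by
          simp only [hG]
          exact (integral_integral_swap (hFub x)).symm
      _ = 0 := by
          rw [integral_congr_ae (Filter.Eventually.of_forall fun s => hzero s x)]
          exact integral_zero _ _
  -- conclude
  have : ∀ᵐ x ∂ν, (∫ t, ∫ y,
      (((if t ≤ C then (1 : ℝ) else 0) * (y - b' (inner ℝ (d (t, x)) θ₀ : ℝ)) * f y t x) •
          d (t, x) +
        ((if C < t then (1 : ℝ) else 0) * f y t x) • R y x) ∂μ ∂(F₁ x)) = 0 := by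
    filter_upwards [hDenpos] with x hx using hmain x hx
  rw [integral_congr_ae this, integral_zero]
end
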